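/- arXiv:1911.09942 — 6 statements merged into one kernel-verified Lean document; each statement's English description precedes it below -/
import Mathlib

section
/- Let (L,[·,·]') be a Lie algebra over a field K and let α, β : L → L be two commuting bijective linear maps which are both Lie algebra automorphisms of (L,[·,·]') (i.e., α[x,y]' = [α(x),α(y)]' and β[x,y]' = [β(x),β(y)]' for all x,y ∈ L). Define the bilinear map [·,·] : L × L → L by [x,y] = [α(x),β(y)]'. Then (L,[·,·],α,β) is a regular BiHom-Lie algebra; that is, α∘β = β∘α, α and β are multiplicative for [·,·], [β(x),α(y)] = -[β(y),α(x)] for all x,y, the BiHom-Jacobi identity [β²(x),[β(y),α(z)]] + [β²(y),[β(z),α(x)]] + [β²(z),[β(x),α(y)]] = 0 holds for all x,y,z, and α, β are bijective. -/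
/-- If `(L, [·,·]')` is a Lie algebra and `α, β` are commuting
bijective Lie algebra automorphisms, then `(L, [x,y] := [α x, β y]', α, β)` is a
regular BiHom-Lie algebra. -/
theorem yau_twist_is_regular_biHomLie {K L : Type*} [Field K] [LieRing L] [LieAlgebra K L]
    (α β : L →ₗ[K] L)
    (hα : Function.Bijective α) (hβ : Function.Bijective β)
    (hcomm : ∀ x : L, α (β x) = β (α x))
    (hαaut : ∀ x y : L, α ⁅x, y⁆ = ⁅α x, α y⁆)
    (hβaut : ∀ x y : L, β ⁅x, y⁆ = ⁅β x, β y⁆) :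
    (∀ x : L, α (β x) = β (α x)) ∧
    (∀ x y : L, α ⁅α x, β y⁆ = ⁅α (α x), β (α y)⁆) ∧
    (∀ x y : L, β ⁅α x, β y⁆ = ⁅α (β x), β (β y)⁆) ∧
    (∀ x y : L, ⁅α (β x), β (α y)⁆ = - ⁅α (β y), β (α x)⁆) ∧
    (∀ x y z : L,
      ⁅α (β (β x)), β ⁅α (β y), β (α z)⁆⁆ + ⁅α (β (β y)), β ⁅α (β z), β (α x)⁆⁆
        + ⁅α (β (β z)), β ⁅α (β x), β (α y)⁆⁆ = 0) ∧
    Function.Bijective α ∧ Function.Bijective β := by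
  refine ⟨hcomm, ?_, ?_, ?_, ?_, hα, hβ⟩
  · intro x y
    rw [hαaut, hcomm]
  · intro x y
    rw [hβaut, hcomm]
  · intro x y
    rw [hcomm y, ← hcomm x, ← lie_skew]
  · intro x y z
    have key : ∀ a b : L, β ⁅α (β a), β (α b)⁆ = ⁅α (β (β a)), α (β (β b))⁆ := by
      intro a b
      simp only [hβaut, ← hcomm]
    rw [key, key, key]
    exact lie_jacobi _ _ _
end

section
/- Let (L,[·,·],α,β) be a regular BiHom-Lie algebra over a field K, and define the bilinear map [·,·]' : L × L → L by [x,y]' = [α⁻¹(x),β⁻¹(y)] for all x,y ∈ L. Then (L,[·,·]') is a Lie algebra, i.e., [·,·]' is skew-symmetric ([x,y]' = -[y,x]') and satisfies the Jacobi identity [x,[y,z]']' + [y,[z,x]']' + [z,[x,y]']' = 0 for all x,y,z ∈ L. -/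
/-- The induced bracket `[x,y]' = [α⁻¹ x, β⁻¹ y]` of a regular BiHom-Lie algebra. -/
def inducedBracket {K L : Type*} [Field K] [AddCommGroup L] [Module K L]
    (br : L →ₗ[K] L →ₗ[K] L) (α β : L ≃ₗ[K] L) (x y : L) : L :=
  br (α.symm x) (β.symm y)

/-- If `(L, br, α, β)` is a regular BiHom-Lie algebra, then the
induced bracket `[x,y]' = br (α⁻¹ x) (β⁻¹ y)` is skew-symmetric and satisfies the
Jacobi identity, i.e. `(L, [·,·]')` is a Lie algebra. -/
theorem induced_is_lie {K L : Type*} [Field K] [AddCommGroup L] [Module K L]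
    (br : L →ₗ[K] L →ₗ[K] L) (α β : L ≃ₗ[K] L)
    (hcomm : ∀ x : L, α (β x) = β (α x))
    (hmulα : ∀ x y : L, α (br x y) = br (α x) (α y))
    (hmulβ : ∀ x y : L, β (br x y) = br (β x) (β y))
    (hskew : ∀ x y : L, br (β x) (α y) = - br (β y) (α x))
    (hjac : ∀ x y z : L,
      br (β (β x)) (br (β y) (α z)) + br (β (β y)) (br (β z) (α x))
        + br (β (β z)) (br (β x) (α y)) = 0) :
    (∀ x y : L, inducedBracket br α β x y = - inducedBracket br α β y x) ∧
    (∀ x y z : L,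
      inducedBracket br α β x (inducedBracket br α β y z)
        + inducedBracket br α β y (inducedBracket br α β z x)
        + inducedBracket br α β z (inducedBracket br α β x y) = 0) := by
  -- commuting lemmas
  have l1 : ∀ t : L, β (α.symm t) = α.symm (β t) := by
    intro t
    apply α.injective
    rw [hcomm, α.apply_symm_apply, α.apply_symm_apply]
  have l2 : ∀ t : L, α (β.symm t) = β.symm (α t) := by
    intro t
    apply β.injective
    rw [← hcomm, β.apply_symm_apply, β.apply_symm_apply]
  have h3 : ∀ t : L, β.symm (α.symm t) = α.symm (β.symm t) := by
    intro t
    apply α.injective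
    rw [l2, α.apply_symm_apply, α.apply_symm_apply]
  have hmulβ' : ∀ u v : L, β.symm (br u v) = br (β.symm u) (β.symm v) := by
    intro u v
    apply β.injective
    rw [β.apply_symm_apply, hmulβ, β.apply_symm_apply, β.apply_symm_apply]
  constructor
  · intro x y
    have e := hskew (β.symm (α.symm x)) (α.symm (β.symm y))
    simp only [l1, l2, LinearEquiv.apply_symm_apply] at e
    simpa only [inducedBracket] using e
  · intro x y z
    have e := hjac (β.symm (β.symm (α.symm x))) (β.symm (α.symm (β.symm y)))
      (α.symm (β.symm (β.symm z)))
    simp only [l1, l2, LinearEquiv.apply_symm_apply] at e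
    simpa only [inducedBracket, hmulβ', h3] using e
end

section
/- Let (L,[·,·],α,β) be a finite-dimensional simple multiplicative BiHom-Lie algebra over the field ℂ of complex numbers (so α and β are bijective). Then its induced Lie algebra (L,[·,·]'), with [x,y]' = [α⁻¹(x),β⁻¹(y)], is a semisimple Lie algebra; equivalently, the maximal solvable ideal (radical) of (L,[·,·]') is zero. -/
/-- `h` is an ideal of the BiHom-Lie algebra `(L, br, α, β)`. -/
def IsBiHomIdeal {K L : Type*} [Field K] [AddCommGroup L] [Module K L]
    (br : L →ₗ[K] L →ₗ[K] L) (α β : L →ₗ[K] L) (h : Submodule K L) : Prop :=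
  (∀ x ∈ h, α x ∈ h) ∧ (∀ x ∈ h, β x ∈ h) ∧ (∀ x ∈ h, ∀ y : L, br x y ∈ h)

/-- `(L, br, α, β)` is simple: nonabelian and without proper ideals. -/
def IsSimpleBiHom {K L : Type*} [Field K] [AddCommGroup L] [Module K L]
    (br : L →ₗ[K] L →ₗ[K] L) (α β : L →ₗ[K] L) : Prop :=
  (∃ x y : L, br x y ≠ 0) ∧
    ∀ h : Submodule K L, IsBiHomIdeal br α β h → h = ⊥ ∨ h = ⊤

/-- `I` is an ideal of `L` for the bracket `br'`. -/
def IsLieIdealFor {K L : Type*} [Field K] [AddCommGroup L] [Module K L]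
    (br' : L → L → L) (I : Submodule K L) : Prop :=
  ∀ x ∈ I, ∀ y : L, br' x y ∈ I ∧ br' y x ∈ I

/-- The derived series of a submodule with respect to a bracket `br'`. -/
def derivedSeriesFor {K L : Type*} [Field K] [AddCommGroup L] [Module K L]
    (br' : L → L → L) (I : Submodule K L) : ℕ → Submodule K L
  | 0 => I
  | n + 1 => Submodule.span K
      {z : L | ∃ x ∈ derivedSeriesFor br' I n, ∃ y ∈ derivedSeriesFor br' I n, br' x y = z}

/-- A submodule is solvable for `br'` if its derived series terminates at `⊥`. -/
def IsSolvableFor {K L : Type*} [Field K] [AddCommGroup L] [Module K L]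
    (br' : L → L → L) (I : Submodule K L) : Prop :=
  ∃ n : ℕ, derivedSeriesFor br' I n = ⊥

section Aux

variable {L : Type*} [AddCommGroup L] [Module ℂ L]

namespace BiHomAux

lemma dsf_succ (br' : L → L → L) (I : Submodule ℂ L) (n : ℕ) :
    derivedSeriesFor br' I (n + 1) = Submodule.span ℂ
      {z : L | ∃ x ∈ derivedSeriesFor br' I n, ∃ y ∈ derivedSeriesFor br' I n, br' x y = z} :=
  rfl

lemma dsf_mono {br' : L → L → L} {I J : Submodule ℂ L} (h : I ≤ J) :
    ∀ n, derivedSeriesFor br' I n ≤ derivedSeriesFor br' J n := by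
  intro n
  induction n with
  | zero => exact h
  | succ n ih =>
    rw [dsf_succ, dsf_succ]
    apply Submodule.span_mono
    rintro z ⟨x, hx, y, hy, rfl⟩
    exact ⟨x, ih hx, y, ih hy, rfl⟩

lemma dsf_add (br' : L → L → L) (I : Submodule ℂ L) (n m : ℕ) :
    derivedSeriesFor br' I (n + m) = derivedSeriesFor br' (derivedSeriesFor br' I n) m := by
  induction m with
  | zero => rfl
  | succ m ih =>
    have h : n + (m + 1) = (n + m) + 1 := rfl
    rw [h, dsf_succ, dsf_succ, ih]

variable (br : L →ₗ[ℂ] L →ₗ[ℂ] L) (α β : L ≃ₗ[ℂ] L)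

lemma ib_add_left (x x' y : L) :
    inducedBracket br α β (x + x') y
      = inducedBracket br α β x y + inducedBracket br α β x' y := by
  simp [inducedBracket, map_add, LinearMap.add_apply]

lemma ib_add_right (x y y' : L) :
    inducedBracket br α β x (y + y')
      = inducedBracket br α β x y + inducedBracket br α β x y' := by
  simp [inducedBracket, map_add]

lemma ib_zero_left (y : L) : inducedBracket br α β 0 y = 0 := by
  simp [inducedBracket]

lemma ib_zero_right (x : L) : inducedBracket br α β x 0 = 0 := by
  simp [inducedBracket]

lemma bot_ideal : IsLieIdealFor (inducedBracket br α β) (⊥ : Submodule ℂ L) := by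
  intro x hx y
  rw [Submodule.mem_bot] at hx
  subst hx
  constructor
  · simp [ib_zero_left br α β y, Submodule.mem_bot]
  · simp [ib_zero_right br α β y, Submodule.mem_bot]

lemma sup_ideal {I J : Submodule ℂ L}
    (hI : IsLieIdealFor (inducedBracket br α β) I)
    (hJ : IsLieIdealFor (inducedBracket br α β) J) :
    IsLieIdealFor (inducedBracket br α β) (I ⊔ J) := by
  intro x hx y
  obtain ⟨a, ha, b, hb, rfl⟩ := Submodule.mem_sup.mp hx
  constructor
  · rw [ib_add_left]
    exact Submodule.add_mem _ (Submodule.mem_sup_left (hI a ha y).1)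
      (Submodule.mem_sup_right (hJ b hb y).1)
  · have h : inducedBracket br α β y (a + b)
        = inducedBracket br α β y a + inducedBracket br α β y b := ib_add_right br α β y a b
    rw [h]
    exact Submodule.add_mem _ (Submodule.mem_sup_left (hI a ha y).2)
      (Submodule.mem_sup_right (hJ b hb y).2)

lemma dsf_sup_le {I J : Submodule ℂ L}
    (hJ : IsLieIdealFor (inducedBracket br α β) J) :
    ∀ n, derivedSeriesFor (inducedBracket br α β) (I ⊔ J) n
      ≤ derivedSeriesFor (inducedBracket br α β) I n ⊔ J := by
  intro n
  induction n with
  | zero => exact le_refl _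
  | succ n ih =>
    rw [dsf_succ]
    apply Submodule.span_le.mpr
    rintro z ⟨x, hx, y, hy, rfl⟩
    obtain ⟨a, ha, b, hb, rfl⟩ := Submodule.mem_sup.mp (ih hx)
    obtain ⟨c, hc, d, hd, rfl⟩ := Submodule.mem_sup.mp (ih hy)
    have h1 : inducedBracket br α β a c
        ∈ derivedSeriesFor (inducedBracket br α β) I (n + 1) :=
      Submodule.subset_span ⟨a, ha, c, hc, rfl⟩
    have h2 : inducedBracket br α β a d ∈ J := (hJ d hd a).2
    have h3 : inducedBracket br α β b (c + d) ∈ J := (hJ b hb (c + d)).1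
    have hsplit : inducedBracket br α β (a + b) (c + d)
        = inducedBracket br α β a c + inducedBracket br α β a d
          + inducedBracket br α β b (c + d) := by
      rw [ib_add_left, ib_add_right]
    rw [SetLike.mem_coe, hsplit]
    exact Submodule.add_mem _
      (Submodule.add_mem _ (Submodule.mem_sup_left h1) (Submodule.mem_sup_right h2))
      (Submodule.mem_sup_right h3)

lemma solvable_sup {I J : Submodule ℂ L}
    (hJid : IsLieIdealFor (inducedBracket br α β) J)
    (hI : IsSolvableFor (inducedBracket br α β) I)
    (hJ : IsSolvableFor (inducedBracket br α β) J) :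
    IsSolvableFor (inducedBracket br α β) (I ⊔ J) := by
  obtain ⟨n, hn⟩ := hI
  obtain ⟨m, hm⟩ := hJ
  refine ⟨n + m, le_bot_iff.mp ?_⟩
  have h1 : derivedSeriesFor (inducedBracket br α β) (I ⊔ J) n ≤ J := by
    have := dsf_sup_le br α β hJid (I := I) n
    rwa [hn, bot_sup_eq] at this
  calc derivedSeriesFor (inducedBracket br α β) (I ⊔ J) (n + m)
      = derivedSeriesFor (inducedBracket br α β)
          (derivedSeriesFor (inducedBracket br α β) (I ⊔ J) n) m := dsf_add _ _ n m
    _ ≤ derivedSeriesFor (inducedBracket br α β) J m := dsf_mono h1 m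
    _ = ⊥ := hm

/-- An automorphism compatible with the BiHom structure. -/
def CommAut (f : L ≃ₗ[ℂ] L) : Prop :=
  (∀ x y, f (br x y) = br (f x) (f y)) ∧ (∀ x, f (α x) = α (f x)) ∧ (∀ x, f (β x) = β (f x))

lemma commAut_one : CommAut br α β 1 := by
  refine ⟨fun x y => rfl, fun x => rfl, fun x => rfl⟩

lemma commAut_mul {f g : L ≃ₗ[ℂ] L} (hf : CommAut br α β f) (hg : CommAut br α β g) :
    CommAut br α β (f * g) := by
  refine ⟨fun x y => ?_, fun x => ?_, fun x => ?_⟩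
  · show f (g (br x y)) = br (f (g x)) (f (g y))
    rw [hg.1, hf.1]
  · show f (g (α x)) = α (f (g x))
    rw [hg.2.1, hf.2.1]
  · show f (g (β x)) = β (f (g x))
    rw [hg.2.2, hf.2.2]

lemma commAut_inv {f : L ≃ₗ[ℂ] L} (hf : CommAut br α β f) : CommAut br α β f⁻¹ := by
  refine ⟨fun x y => ?_, fun x => ?_, fun x => ?_⟩
  · show f.symm (br x y) = br (f.symm x) (f.symm y)
    apply f.injective
    rw [f.apply_symm_apply, hf.1, f.apply_symm_apply, f.apply_symm_apply]
  · show f.symm (α x) = α (f.symm x)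
    apply f.injective
    rw [f.apply_symm_apply, hf.2.1, f.apply_symm_apply]
  · show f.symm (β x) = β (f.symm x)
    apply f.injective
    rw [f.apply_symm_apply, hf.2.2, f.apply_symm_apply]

lemma commAut_zpow {g : L ≃ₗ[ℂ] L} (hg : CommAut br α β g) :
    ∀ i : ℤ, CommAut br α β (g ^ i) := by
  intro i
  induction i using Int.induction_on with
  | zero => rw [zpow_zero]; exact commAut_one br α β
  | succ i ih =>
    rw [zpow_add_one]
    exact commAut_mul br α β ih hg
  | pred i ih =>
    rw [zpow_sub_one]
    exact commAut_mul br α β ih (commAut_inv br α β hg)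

lemma commAut_symm_alpha {f : L ≃ₗ[ℂ] L} (hf : CommAut br α β f) (z : L) :
    f (α.symm z) = α.symm (f z) := by
  apply α.injective
  rw [← hf.2.1, α.apply_symm_apply, α.apply_symm_apply]

lemma commAut_symm_beta {f : L ≃ₗ[ℂ] L} (hf : CommAut br α β f) (z : L) :
    f (β.symm z) = β.symm (f z) := by
  apply β.injective
  rw [← hf.2.2, β.apply_symm_apply, β.apply_symm_apply]

lemma commAut_brHom {f : L ≃ₗ[ℂ] L} (hf : CommAut br α β f) (x y : L) :
    f (inducedBracket br α β x y) = inducedBracket br α β (f x) (f y) := by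
  unfold inducedBracket
  rw [hf.1, commAut_symm_alpha br α β hf, commAut_symm_beta br α β hf]

lemma ideal_map {f : L ≃ₗ[ℂ] L}
    (hhom : ∀ x y, f (inducedBracket br α β x y) = inducedBracket br α β (f x) (f y))
    {I : Submodule ℂ L} (hI : IsLieIdealFor (inducedBracket br α β) I) :
    IsLieIdealFor (inducedBracket br α β) (I.map f.toLinearMap) := by
  intro x hx y
  obtain ⟨a, ha, rfl⟩ := Submodule.mem_map.mp hx
  simp only [LinearEquiv.coe_coe]
  constructor
  · refine Submodule.mem_map.mpr ⟨inducedBracket br α β a (f.symm y),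
      (hI a ha (f.symm y)).1, ?_⟩
    show f _ = _
    rw [hhom, f.apply_symm_apply]
  · refine Submodule.mem_map.mpr ⟨inducedBracket br α β (f.symm y) a,
      (hI a ha (f.symm y)).2, ?_⟩
    show f _ = _
    rw [hhom, f.apply_symm_apply]

lemma dsf_map {f : L ≃ₗ[ℂ] L}
    (hhom : ∀ x y, f (inducedBracket br α β x y) = inducedBracket br α β (f x) (f y))
    (I : Submodule ℂ L) :
    ∀ n, derivedSeriesFor (inducedBracket br α β) (I.map f.toLinearMap) n
      = (derivedSeriesFor (inducedBracket br α β) I n).map f.toLinearMap := by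
  intro n
  induction n with
  | zero => rfl
  | succ n ih =>
    rw [dsf_succ, dsf_succ, ih, Submodule.map_span]
    congr 1
    ext z
    constructor
    · rintro ⟨x, hx, y, hy, rfl⟩
      obtain ⟨a, ha, rfl⟩ := Submodule.mem_map.mp hx
      obtain ⟨b, hb, rfl⟩ := Submodule.mem_map.mp hy
      refine ⟨inducedBracket br α β a b, ⟨a, ha, b, hb, rfl⟩, ?_⟩
      show f _ = _
      simp only [LinearEquiv.coe_coe]
      exact hhom a b
    · rintro ⟨w, ⟨a, ha, b, hb, rfl⟩, rfl⟩
      refine ⟨f a, Submodule.mem_map_of_mem ha, f b, Submodule.mem_map_of_mem hb, ?_⟩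
      show _ = f _
      exact (hhom a b).symm

lemma solvable_map {f : L ≃ₗ[ℂ] L}
    (hhom : ∀ x y, f (inducedBracket br α β x y) = inducedBracket br α β (f x) (f y))
    {I : Submodule ℂ L} (hI : IsSolvableFor (inducedBracket br α β) I) :
    IsSolvableFor (inducedBracket br α β) (I.map f.toLinearMap) := by
  obtain ⟨n, hn⟩ := hI
  exact ⟨n, by rw [dsf_map br α β hhom I n, hn, Submodule.map_bot]⟩

/-- The left idealizer of `J` w.r.t. `br`. -/
def leftIdealizer (J : Submodule ℂ L) : Submodule ℂ L where
  carrier := {x | ∀ y, br x y ∈ J}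
  zero_mem' := by intro y; simp
  add_mem' := by
    intro a b ha hb y
    have : br (a + b) y = br a y + br b y := by simp [map_add, LinearMap.add_apply]
    rw [this]
    exact Submodule.add_mem _ (ha y) (hb y)
  smul_mem' := by
    intro c a ha y
    have : br (c • a) y = c • br a y := by simp [map_smul, LinearMap.smul_apply]
    rw [this]
    exact Submodule.smul_mem _ _ (ha y)

lemma mem_leftIdealizer {J : Submodule ℂ L} {x : L} :
    x ∈ leftIdealizer br J ↔ ∀ y, br x y ∈ J := Iff.rfl

end BiHomAux

end Aux

open BiHomAux in
/-- The induced Lie algebra of a finite-dimensional simple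
multiplicative BiHom-Lie algebra over `ℂ` is semisimple: every solvable Lie ideal of
the induced Lie algebra is zero. -/
theorem induced_lie_semisimple {L : Type*} [AddCommGroup L] [Module ℂ L]
    [FiniteDimensional ℂ L]
    (br : L →ₗ[ℂ] L →ₗ[ℂ] L) (α β : L ≃ₗ[ℂ] L)
    (hcomm : ∀ x : L, α (β x) = β (α x))
    (hmulα : ∀ x y : L, α (br x y) = br (α x) (α y))
    (hmulβ : ∀ x y : L, β (br x y) = br (β x) (β y))
    (hskew : ∀ x y : L, br (β x) (α y) = - br (β y) (α x))
    (hjac : ∀ x y z : L,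
      br (β (β x)) (br (β y) (α z)) + br (β (β y)) (br (β z) (α x))
        + br (β (β z)) (br (β x) (α y)) = 0)
    (hsimple : IsSimpleBiHom br α.toLinearMap β.toLinearMap) :
    ∀ I : Submodule ℂ L, IsLieIdealFor (inducedBracket br α β) I →
      IsSolvableFor (inducedBracket br α β) I → I = ⊥ := by
  classical
  intro I hI hSolv
  by_contra hne
  have hABcomm : Commute α β := by
    refine LinearEquiv.ext fun x => ?_
    show α (β x) = β (α x)
    exact hcomm x
  have hCAα : CommAut br α β α := ⟨hmulα, fun _ => rfl, fun x => hcomm x⟩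
  have hCAβ : CommAut br α β β := ⟨hmulβ, fun x => (hcomm x).symm, fun _ => rfl⟩
  set ψ : ℤ × ℤ → (L ≃ₗ[ℂ] L) := fun p => α ^ p.1 * β ^ p.2 with hψdef
  have hCA : ∀ p, CommAut br α β (ψ p) := fun p =>
    commAut_mul br α β (commAut_zpow br α β hCAα p.1) (commAut_zpow br α β hCAβ p.2)
  set M : ℤ × ℤ → Submodule ℂ L := fun p => I.map (ψ p).toLinearMap with hMdef
  set J : Submodule ℂ L := ⨆ p, M p with hJdef
  -- group computations
  have hαψ : ∀ p : ℤ × ℤ, α * ψ p = ψ (p.1 + 1, p.2) := by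
    intro p
    show α * (α ^ p.1 * β ^ p.2) = α ^ (p.1 + 1) * β ^ p.2
    rw [← mul_assoc, ((Commute.refl α).zpow_right p.1).eq, ← zpow_add_one]
  have hβψ : ∀ p : ℤ × ℤ, β * ψ p = ψ (p.1, p.2 + 1) := by
    intro p
    show β * (α ^ p.1 * β ^ p.2) = α ^ p.1 * β ^ (p.2 + 1)
    rw [← mul_assoc, (hABcomm.symm.zpow_right p.1).eq, mul_assoc,
      ((Commute.refl β).zpow_right p.2).eq, ← zpow_add_one]
  have hψα : ∀ p : ℤ × ℤ, ψ (p.1 + 1, p.2) * α⁻¹ = ψ p := by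
    intro p
    show α ^ (p.1 + 1) * β ^ p.2 * α⁻¹ = α ^ p.1 * β ^ p.2
    rw [mul_assoc, ((hABcomm.symm.zpow_left p.2).inv_right).eq, ← mul_assoc,
      ← zpow_sub_one]
    norm_num
  have hmapψ : ∀ (g : L ≃ₗ[ℂ] L) (p : ℤ × ℤ),
      (M p).map g.toLinearMap = I.map ((g * ψ p).toLinearMap) := by
    intro g p
    show (I.map (ψ p).toLinearMap).map g.toLinearMap = _
    rw [← Submodule.map_comp]
    rfl
  -- J is stable under α and β
  have hαJ : ∀ x ∈ J, α x ∈ J := by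
    intro x hx
    have hle : J.map α.toLinearMap ≤ J := by
      rw [hJdef, Submodule.map_iSup]
      apply iSup_le
      intro p
      rw [hmapψ α p, hαψ p]
      exact le_iSup M (p.1 + 1, p.2)
    exact hle (Submodule.mem_map_of_mem hx)
  have hβJ : ∀ x ∈ J, β x ∈ J := by
    intro x hx
    have hle : J.map β.toLinearMap ≤ J := by
      rw [hJdef, Submodule.map_iSup]
      apply iSup_le
      intro p
      rw [hmapψ β p, hβψ p]
      exact le_iSup M (p.1, p.2 + 1)
    exact hle (Submodule.mem_map_of_mem hx)
  -- J absorbs brackets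
  have hbrJ : ∀ x ∈ J, ∀ y : L, br x y ∈ J := by
    have hle : J ≤ leftIdealizer br J := by
      rw [hJdef]
      apply iSup_le
      intro p x hx
      obtain ⟨a, ha, rfl⟩ := Submodule.mem_map.mp hx
      rw [mem_leftIdealizer]
      intro y
      have h1 : br (α.symm a) ((ψ (p.1 + 1, p.2)).symm y) ∈ I := by
        have h := (hI a ha (β ((ψ (p.1 + 1, p.2)).symm y))).1
        have heq : inducedBracket br α β a (β ((ψ (p.1 + 1, p.2)).symm y))
            = br (α.symm a) ((ψ (p.1 + 1, p.2)).symm y) := by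
          unfold inducedBracket
          rw [β.symm_apply_apply]
        rwa [heq] at h
      have h2 : ψ (p.1 + 1, p.2) (br (α.symm a) ((ψ (p.1 + 1, p.2)).symm y))
          = br (ψ p a) y := by
        rw [(hCA (p.1 + 1, p.2)).1, (ψ (p.1 + 1, p.2)).apply_symm_apply]
        have h3 : ψ (p.1 + 1, p.2) (α.symm a) = ψ p a := by
          have := congrArg (fun g : L ≃ₗ[ℂ] L => g a) (hψα p)
          exact this
        rw [h3]
      show br ((ψ p).toLinearMap a) y ∈ J
      have : br ((ψ p).toLinearMap a) y = br (ψ p a) y := rfl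
      rw [this, ← h2]
      exact le_iSup M (p.1 + 1, p.2)
        (Submodule.mem_map_of_mem h1)
    intro x hx y
    exact (mem_leftIdealizer br).mp (hle hx) y
  have hJBiHom : IsBiHomIdeal br α.toLinearMap β.toLinearMap J := ⟨hαJ, hβJ, hbrJ⟩
  have hIJ : I ≤ J := by
    intro x hx
    have hx0 : x ∈ M (0, 0) := by
      refine Submodule.mem_map.mpr ⟨x, hx, ?_⟩
      show (α ^ (0 : ℤ) * β ^ (0 : ℤ)) x = x
      rw [zpow_zero, zpow_zero, one_mul]
      rfl
    exact le_iSup M (0, 0) hx0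
  have hJtop : J = ⊤ := by
    rcases hsimple.2 J hJBiHom with h | h
    · exact absurd (le_bot_iff.mp (h ▸ hIJ)) hne
    · exact h
  -- each M p is a solvable ideal
  have hMideal : ∀ p, IsLieIdealFor (inducedBracket br α β) (M p) := fun p =>
    ideal_map br α β (commAut_brHom br α β (hCA p)) hI
  have hMsolv : ∀ p, IsSolvableFor (inducedBracket br α β) (M p) := fun p =>
    solvable_map br α β (commAut_brHom br α β (hCA p)) hSolv
  -- extract a finite subfamily covering ⊤
  obtain ⟨S, hS⟩ : (⊤ : Submodule ℂ L).FG := Module.Finite.fg_top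
  have hmemJ : ∀ s ∈ S, ∃ t : Finset (ℤ × ℤ), s ∈ ⨆ p ∈ t, M p := by
    intro s _
    have hsJ : s ∈ J := by rw [hJtop]; exact Submodule.mem_top
    rw [hJdef] at hsJ
    exact Submodule.mem_iSup_iff_exists_finset.mp hsJ
  choose! F hF using hmemJ
  have htople : (⊤ : Submodule ℂ L) ≤ ⨆ p ∈ S.biUnion F, M p := by
    rw [← hS, Submodule.span_le]
    intro s hs
    have hsS : s ∈ S := hs
    refine (?_ : (⨆ p ∈ F s, M p) ≤ ⨆ p ∈ S.biUnion F, M p) (hF s hsS)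
    refine biSup_mono ?_
    intro p hp
    exact Finset.mem_biUnion.mpr ⟨s, hsS, hp⟩
  -- finite sups of solvable ideals are solvable
  have hfin : ∀ t : Finset (ℤ × ℤ),
      IsLieIdealFor (inducedBracket br α β) (⨆ p ∈ t, M p) ∧
      IsSolvableFor (inducedBracket br α β) (⨆ p ∈ t, M p) := by
    intro t
    induction t using Finset.induction_on with
    | empty =>
      have hbot : (⨆ p ∈ (∅ : Finset (ℤ × ℤ)), M p) = ⊥ := by simp
      rw [hbot]
      exact ⟨bot_ideal br α β, ⟨0, rfl⟩⟩
    | @insert a t _ ih =>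
      rw [Finset.iSup_insert]
      exact ⟨sup_ideal br α β (hMideal a) ih.1,
        solvable_sup br α β ih.1 (hMsolv a) ih.2⟩
  have htops : IsSolvableFor (inducedBracket br α β) (⊤ : Submodule ℂ L) := by
    obtain ⟨n, hn⟩ := (hfin (S.biUnion F)).2
    refine ⟨n, le_bot_iff.mp ?_⟩
    calc derivedSeriesFor (inducedBracket br α β) (⊤ : Submodule ℂ L) n
        ≤ derivedSeriesFor (inducedBracket br α β) (⨆ p ∈ S.biUnion F, M p) n :=
          dsf_mono htople n
      _ = ⊥ := hn
  -- but ⊤ is not solvable, since the span of bracket values is a BiHom ideal equal to ⊤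
  set D : Submodule ℂ L := Submodule.span ℂ {z : L | ∃ u v : L, br u v = z} with hD
  have hDBiHom : IsBiHomIdeal br α.toLinearMap β.toLinearMap D := by
    refine ⟨?_, ?_, ?_⟩
    · intro x hx
      have hle : D ≤ Submodule.comap α.toLinearMap D := by
        rw [hD]
        apply Submodule.span_le.mpr
        rintro z ⟨u, v, rfl⟩
        show α (br u v) ∈ D
        rw [hmulα]
        exact Submodule.subset_span ⟨α u, α v, rfl⟩
      exact hle hx
    · intro x hx
      have hle : D ≤ Submodule.comap β.toLinearMap D := by
        rw [hD]
        apply Submodule.span_le.mpr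
        rintro z ⟨u, v, rfl⟩
        show β (br u v) ∈ D
        rw [hmulβ]
        exact Submodule.subset_span ⟨β u, β v, rfl⟩
      exact hle hx
    · intro x _ y
      exact Submodule.subset_span ⟨x, y, rfl⟩
  have hDtop : D = ⊤ := by
    rcases hsimple.2 D hDBiHom with h | h
    · exfalso
      obtain ⟨x, y, hxy⟩ := hsimple.1
      apply hxy
      have hxyD : br x y ∈ D := Submodule.subset_span ⟨x, y, rfl⟩
      rw [h] at hxyD
      exact (Submodule.mem_bot ℂ).mp hxyD
    · exact h
  have hdsf_top : ∀ n,
      derivedSeriesFor (inducedBracket br α β) (⊤ : Submodule ℂ L) n = ⊤ := by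
    intro n
    induction n with
    | zero => rfl
    | succ n ih =>
      rw [dsf_succ, ih]
      have hset : {z : L | ∃ x ∈ (⊤ : Submodule ℂ L), ∃ y ∈ (⊤ : Submodule ℂ L),
          inducedBracket br α β x y = z} = {z : L | ∃ u v : L, br u v = z} := by
        ext z
        constructor
        · rintro ⟨x, -, y, -, rfl⟩
          exact ⟨α.symm x, β.symm y, rfl⟩
        · rintro ⟨u, v, rfl⟩
          refine ⟨α u, Submodule.mem_top, β v, Submodule.mem_top, ?_⟩
          unfold inducedBracket
          rw [α.symm_apply_apply, β.symm_apply_apply]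
      rw [hset, ← hD, hDtop]
  obtain ⟨n, hn⟩ := htops
  obtain ⟨x, y, hxy⟩ := hsimple.1
  rw [hdsf_top n] at hn
  apply hxy
  have hmem : br x y ∈ (⊤ : Submodule ℂ L) := Submodule.mem_top
  rw [hn] at hmem
  exact (Submodule.mem_bot ℂ).mp hmem
end

section
/- Let α be a Lie algebra automorphism of sl(2,ℂ) (the Lie algebra of traceless 2×2 complex matrices with the commutator bracket), regarded as a ℂ-linear endomorphism of the 3-dimensional vector space sl(2,ℂ). Then there exists a nonzero a ∈ ℂ such that the eigenvalues of α are 1, a, and a⁻¹; equivalently, the characteristic polynomial of α is (X-1)(X-a)(X-a⁻¹). -/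
open Polynomial

namespace Sl2AutAux

open LieAlgebra.SpecialLinear Matrix

local notation "V" => LieAlgebra.SpecialLinear.sl (Fin 2) ℂ

lemma mem_sl' (A : Matrix (Fin 2) (Fin 2) ℂ) :
    A ∈ LieAlgebra.SpecialLinear.sl (Fin 2) ℂ ↔ A.trace = 0 := Iff.rfl

noncomputable def mk3 (a b c : ℂ) : V := ⟨!![a, b; c, -a], by
  rw [mem_sl']; simp [Matrix.trace, Fin.sum_univ_two]⟩

@[simp] lemma mk3_val (a b c : ℂ) : (mk3 a b c).val = !![a, b; c, -a] := rfl

@[simp] lemma lie_val (x y : V) :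
    (⁅x, y⁆ : V).val = x.val * y.val - y.val * x.val := rfl

@[simp] lemma add_val (x y : V) : (x + y).val = x.val + y.val := rfl
@[simp] lemma smul_val (c : ℂ) (x : V) : (c • x).val = c • x.val := rfl

noncomputable def eqv : V ≃ₗ[ℂ] (Fin 3 → ℂ) where
  toFun x := ![x.val 0 0, x.val 0 1, x.val 1 0]
  map_add' x y := by funext i; fin_cases i <;> simp
  map_smul' c x := by funext i; fin_cases i <;> simp
  invFun c := mk3 (c 0) (c 1) (c 2)
  left_inv x := by
    have h : x.val 0 0 + x.val 1 1 = 0 := by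
      have h2 := x.2
      rw [mem_sl'] at h2
      simpa [Matrix.trace, Fin.sum_univ_two] using h2
    apply Subtype.ext
    ext i j
    fin_cases i <;> fin_cases j <;> simp [mk3]
    linear_combination -h
  right_inv c := by funext i; fin_cases i <;> simp [mk3]

@[simp] lemma eqv_apply (x : V) : eqv x = ![x.val 0 0, x.val 0 1, x.val 1 0] := rfl

noncomputable def bV : Module.Basis (Fin 3) ℂ V := Module.Basis.ofEquivFun eqv

lemma bV0 : bV 0 = mk3 1 0 0 := by
  simp only [bV, Module.Basis.coe_ofEquivFun]
  show mk3 _ _ _ = _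
  congr 1 <;> simp [Pi.single_apply]

lemma bV1 : bV 1 = mk3 0 1 0 := by
  simp only [bV, Module.Basis.coe_ofEquivFun]
  show mk3 _ _ _ = _
  congr 1 <;> simp [Pi.single_apply]

lemma bV2 : bV 2 = mk3 0 0 1 := by
  simp only [bV, Module.Basis.coe_ofEquivFun]
  show mk3 _ _ _ = _
  congr 1 <;> simp [Pi.single_apply]

lemma bV_repr (x : V) (i : Fin 3) : bV.repr x i = eqv x i :=
  Module.Basis.ofEquivFun_repr_apply _ _ _

/-- The matrix of `ad x` in the basis `bV`. -/
noncomputable def adM (x : V) : Matrix (Fin 3) (Fin 3) ℂ :=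
  LinearMap.toMatrix bV bV (LieAlgebra.ad ℂ V x)

lemma adM_apply (x : V) (i j : Fin 3) : adM x i j = eqv ⁅x, bV j⁆ i := by
  rw [adM, LinearMap.toMatrix_apply, bV_repr]
  rfl

lemma adM0 : adM (bV 0) = !![0,0,0; 0,2,0; 0,0,-2] := by
  ext i j
  rw [adM_apply]
  fin_cases i <;> fin_cases j <;>
    simp [bV0, bV1, bV2, mk3, Ring.lie_def, Matrix.mul_apply, Fin.sum_univ_two,
      Matrix.vecHead, Matrix.vecTail] <;> norm_num

lemma adM1 : adM (bV 1) = !![0,0,1; -2,0,0; 0,0,0] := by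
  ext i j
  rw [adM_apply]
  fin_cases i <;> fin_cases j <;>
    simp [bV0, bV1, bV2, mk3, Ring.lie_def, Matrix.mul_apply, Fin.sum_univ_two,
      Matrix.vecHead, Matrix.vecTail] <;> norm_num

lemma adM2 : adM (bV 2) = !![0,-1,0; 0,0,0; 2,0,0] := by
  ext i j
  rw [adM_apply]
  fin_cases i <;> fin_cases j <;>
    simp [bV0, bV1, bV2, mk3, Ring.lie_def, Matrix.mul_apply, Fin.sum_univ_two,
      Matrix.vecHead, Matrix.vecTail] <;> norm_num

lemma killing_apply (x y : V) :
    killingForm ℂ V x y = (adM x * adM y).trace := by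
  rw [killingForm_apply_apply]
  rw [LinearMap.trace_eq_matrix_trace ℂ bV]
  congr 1
  rw [LinearMap.toMatrix_comp bV bV bV]
  rfl

/-- Gram matrix of the Killing form. -/
lemma killing_gram :
    LinearMap.toMatrix₂ bV bV (killingForm ℂ V) = !![8,0,0; 0,0,4; 0,4,0] := by
  ext i j
  rw [LinearMap.toMatrix₂_apply, killing_apply]
  fin_cases i <;> fin_cases j <;>
    simp [adM0, adM1, adM2, Matrix.trace, Fin.sum_univ_three, Matrix.mul_apply,
      Matrix.vecHead, Matrix.vecTail] <;> norm_num

lemma killing_b0_b1 : killingForm ℂ V ⁅bV 0, bV 1⁆ (bV 2) = 8 := by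
  have h : ⁅bV 0, bV 1⁆ = (2:ℂ) • bV 1 := by
    apply Subtype.ext
    rw [lie_val, smul_val, bV0, bV1]
    ext i j
    fin_cases i <;> fin_cases j <;>
      simp [Matrix.mul_apply, Fin.sum_univ_two, Matrix.vecHead, Matrix.vecTail] <;> norm_num
  have h12 : killingForm ℂ V (bV 1) (bV 2) = 4 := by
    have h3 := congrFun (congrFun killing_gram 1) 2
    rwa [LinearMap.toMatrix₂_apply] at h3
  rw [h, _root_.map_smul, LinearMap.smul_apply, h12, smul_eq_mul]
  norm_num

lemma killing_lie_self_right (x y : V) : killingForm ℂ V ⁅x, y⁆ y = 0 := by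
  rw [LieModule.traceForm_apply_lie_apply ℂ V V, lie_self, map_zero]

lemma killing_lie_self_left (x y : V) : killingForm ℂ V ⁅x, y⁆ x = 0 := by
  have h1 : killingForm ℂ V ⁅x, y⁆ x = killingForm ℂ V x ⁅y, x⁆ :=
    LieModule.traceForm_apply_lie_apply ℂ V V x y x
  have h2 : killingForm ℂ V x ⁅y, x⁆ = killingForm ℂ V ⁅y, x⁆ x :=
    LieModule.traceForm_comm ℂ V V x ⁅y, x⁆
  have h3 : (⁅y, x⁆ : V) = -⁅x, y⁆ := (lie_skew y x).symm
  have h4 : killingForm ℂ V ⁅y, x⁆ x = -killingForm ℂ V ⁅x, y⁆ x := by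
    rw [h3, map_neg, LinearMap.neg_apply]
  have h5 := h1.trans (h2.trans h4)
  have h6 : (2:ℂ) * (killingForm ℂ V ⁅x, y⁆ x) = 0 := by linear_combination h5
  exact (mul_eq_zero.mp h6).resolve_left (two_ne_zero (α := ℂ))

/-- The alternating form `(x,y,z) ↦ κ(⁅x,y⁆, z)`. -/
noncomputable def ω : (V) [⋀^(Fin 3)]→ₗ[ℂ] ℂ where
  toFun v := killingForm ℂ V ⁅v 0, v 1⁆ (v 2)
  map_update_add' := by
    intro inst v i x y
    cases Subsingleton.elim inst (instDecidableEqFin 3)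
    fin_cases i <;>
      simp [Function.update_apply, add_lie, lie_add, map_add]
  map_update_smul' := by
    intro inst v i c x
    cases Subsingleton.elim inst (instDecidableEqFin 3)
    fin_cases i <;>
      simp [Function.update_apply, smul_lie, lie_smul, _root_.map_smul]
  map_eq_zero_of_eq' := by
    intro v i j hv hij
    fin_cases i <;> fin_cases j
    · exact absurd rfl hij
    · -- v 0 = v 1
      show killingForm ℂ V ⁅v 0, v 1⁆ (v 2) = 0
      rw [show v 0 = v 1 from hv, lie_self, map_zero, LinearMap.zero_apply]
    · -- v 0 = v 2
      show killingForm ℂ V ⁅v 0, v 1⁆ (v 2) = 0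
      rw [show v 0 = v 2 from hv]
      exact killing_lie_self_left (v 2) (v 1)
    · -- v 1 = v 0
      show killingForm ℂ V ⁅v 0, v 1⁆ (v 2) = 0
      rw [← show v 1 = v 0 from hv, lie_self, map_zero, LinearMap.zero_apply]
    · exact absurd rfl hij
    · -- v 1 = v 2
      show killingForm ℂ V ⁅v 0, v 1⁆ (v 2) = 0
      rw [show v 1 = v 2 from hv]
      exact killing_lie_self_right (v 0) (v 2)
    · -- v 2 = v 0
      show killingForm ℂ V ⁅v 0, v 1⁆ (v 2) = 0
      rw [show v 2 = v 0 from hv]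
      exact killing_lie_self_left (v 0) (v 1)
    · -- v 2 = v 1
      show killingForm ℂ V ⁅v 0, v 1⁆ (v 2) = 0
      rw [show v 2 = v 1 from hv]
      exact killing_lie_self_right (v 0) (v 1)
    · exact absurd rfl hij

lemma ω_apply (v : Fin 3 → V) : ω v = killingForm ℂ V ⁅v 0, v 1⁆ (v 2) := rfl

lemma eval_charpoly (M : Matrix (Fin 3) (Fin 3) ℂ) (t : ℂ) :
    M.charpoly.eval t = (t • (1 : Matrix (Fin 3) (Fin 3) ℂ) - M).det := by
  rw [Matrix.charpoly, ← Polynomial.coe_evalRingHom, RingHom.map_det]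
  congr 1
  ext i j
  by_cases h : i = j
  · subst h
    simp [Matrix.charmatrix_apply_eq, Matrix.one_apply]
  · simp [Matrix.charmatrix_apply_ne _ _ _ h, Matrix.one_apply, h]

lemma main (α : V →ₗ[ℂ] V)
    (hbij : Function.Bijective α)
    (haut : ∀ x y : V, α ⁅x, y⁆ = ⁅α x, α y⁆) :
    ∃ a : ℂ, a ≠ 0 ∧
      LinearMap.charpoly α = (X - C 1) * (X - C a) * (X - C a⁻¹) := by
  -- the automorphism as a Lie equivalence
  let e : V ≃ₗ⁅ℂ⁆ V :=
    { LinearEquiv.ofBijective α hbij with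
      map_lie' := by intro x y; exact haut x y }
  have he : ∀ x, e x = α x := fun _ => rfl
  -- Killing form invariance
  have hinv : ∀ x y, killingForm ℂ V (α x) (α y) = killingForm ℂ V x y := by
    intro x y
    rw [← he, ← he]
    exact LieAlgebra.killingForm_of_equiv_apply e x y
  -- det α = 1 via the alternating form ω
  have hdet : LinearMap.det α = 1 := by
    have h1 : ω (⇑α ∘ ⇑bV) = LinearMap.det α * ω ⇑bV := by
      conv_lhs => rw [ω.eq_smul_basis_det bV]
      simp only [AlternatingMap.smul_apply, Module.Basis.det_comp, Module.Basis.det_self, smul_eq_mul]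
      ring
    have h2 : ω (⇑α ∘ ⇑bV) = ω ⇑bV := by
      rw [ω_apply, ω_apply]
      simp only [Function.comp_apply]
      rw [← haut, hinv]
    have h3 : ω ⇑bV = 8 := killing_b0_b1
    rw [h2, h3] at h1
    have h4 : LinearMap.det α * 8 = 1 * 8 := by rw [one_mul]; exact h1.symm
    exact mul_right_cancel₀ (by norm_num) h4
  set M := LinearMap.toMatrix bV bV α with hM
  have hdetM : M.det = 1 := by rw [hM, LinearMap.det_toMatrix]; exact hdet
  -- orthogonality wrt the Killing form
  set G : Matrix (Fin 3) (Fin 3) ℂ := !![8,0,0; 0,0,4; 0,4,0] with hG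
  have horth : Mᵀ * G * M = G := by
    have hcomp : (killingForm ℂ V).compl₁₂ α α = killingForm ℂ V := by
      ext x y
      rw [LinearMap.compl₁₂_apply]
      exact hinv x y
    have h5 := congrArg (LinearMap.toMatrix₂ bV bV) hcomp
    rwa [LinearMap.toMatrix₂_compl₁₂ (b₁ := bV) (b₂ := bV), killing_gram] at h5
  have hGdet : G.det = -128 := by
    rw [hG, Matrix.det_fin_three]; simp; norm_num
  have hdG : IsUnit G.det := isUnit_iff_ne_zero.mpr (by rw [hGdet]; norm_num)
  have hdM : IsUnit M.det := by rw [hdetM]; exact isUnit_one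
  have hGinv : G * G⁻¹ = 1 := Matrix.mul_nonsing_inv _ hdG
  have hMinv : M * M⁻¹ = 1 := Matrix.mul_nonsing_inv _ hdM
  have hMinv' : M⁻¹ * M = 1 := Matrix.nonsing_inv_mul _ hdM
  -- det (M - 1) = 0, i.e. 1 is an eigenvalue
  have key : (M - 1).det = 0 := by
    have h2 : Mᵀ * G = G * M⁻¹ := by
      calc Mᵀ * G = Mᵀ * G * M * M⁻¹ := by
            rw [Matrix.mul_assoc (Mᵀ * G) M M⁻¹, hMinv, Matrix.mul_one]
        _ = G * M⁻¹ := by rw [horth]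
    have h1 : Mᵀ - 1 = G * (M⁻¹ - 1) * G⁻¹ := by
      calc Mᵀ - 1 = Mᵀ * (G * G⁻¹) - G * G⁻¹ := by rw [hGinv, Matrix.mul_one]
        _ = (Mᵀ * G - G) * G⁻¹ := by rw [Matrix.sub_mul, Matrix.mul_assoc]
        _ = (G * M⁻¹ - G) * G⁻¹ := by rw [h2]
        _ = G * (M⁻¹ - 1) * G⁻¹ := by rw [Matrix.mul_sub, Matrix.mul_one]
    have hdT : (Mᵀ - 1).det = (M - 1).det := by
      have : Mᵀ - 1 = (M - 1)ᵀ := by rw [Matrix.transpose_sub, Matrix.transpose_one]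
      rw [this, Matrix.det_transpose]
    have hGG : G.det * G⁻¹.det = 1 := by
      have := congrArg Matrix.det hGinv
      rwa [Matrix.det_mul, Matrix.det_one] at this
    have hMd : M⁻¹.det = 1 := by
      have := congrArg Matrix.det hMinv
      rwa [Matrix.det_mul, Matrix.det_one, hdetM, one_mul] at this
    have hinvM : M⁻¹ - 1 = M⁻¹ * (1 - M) := by
      rw [Matrix.mul_sub, Matrix.mul_one, hMinv']
    have h6 : (M - 1).det = (1 - M).det := by
      calc (M - 1).det = (Mᵀ - 1).det := hdT.symm
        _ = G.det * (M⁻¹ - 1).det * G⁻¹.det := by rw [h1, Matrix.det_mul, Matrix.det_mul]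
        _ = (M⁻¹ - 1).det * (G.det * G⁻¹.det) := by ring
        _ = (M⁻¹ - 1).det := by rw [hGG, mul_one]
        _ = M⁻¹.det * (1 - M).det := by rw [hinvM, Matrix.det_mul]
        _ = (1 - M).det := by rw [hMd, one_mul]
    have h7 : (1 - M : Matrix (Fin 3) (Fin 3) ℂ) = -(M - 1) := (neg_sub M 1).symm
    rw [h7, Matrix.det_neg] at h6
    simp only [Fintype.card_fin] at h6
    have h9 : (2:ℂ) * (M - 1).det = 0 := by linear_combination h6
    exact (mul_eq_zero.mp h9).resolve_left (two_ne_zero (α := ℂ))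
  -- characteristic polynomial endgame
  have hchar : LinearMap.charpoly α = M.charpoly := (LinearMap.charpoly_toMatrix α bV).symm
  have hmonic : M.charpoly.Monic := Matrix.charpoly_monic M
  have hdeg : M.charpoly.natDegree = 3 := by
    rw [Matrix.charpoly_natDegree_eq_dim, Fintype.card_fin]
  have hroot : M.charpoly.eval 1 = 0 := by
    rw [eval_charpoly, one_smul]
    have h10 : (1 : Matrix (Fin 3) (Fin 3) ℂ) - M = -(M - 1) := (neg_sub M 1).symm
    rw [h10, Matrix.det_neg, key, mul_zero]
  have heval0 : M.charpoly.eval 0 = -1 := by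
    rw [eval_charpoly, zero_smul, zero_sub, Matrix.det_neg, hdetM]
    norm_num
  obtain ⟨q, hq⟩ : (X - C (1:ℂ)) ∣ M.charpoly := dvd_iff_isRoot.mpr hroot
  have hq0 : q.Monic := by
    refine (monic_X_sub_C (1:ℂ)).of_mul_monic_left ?_
    rw [← hq]; exact hmonic
  have hqdeg : q.natDegree = 2 := by
    have h11 := hdeg
    rw [hq, natDegree_mul (X_sub_C_ne_zero 1) hq0.ne_zero, natDegree_X_sub_C] at h11
    omega
  obtain ⟨a, ha⟩ : ∃ a : ℂ, q.IsRoot a := by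
    apply Complex.exists_root
    rw [degree_eq_natDegree hq0.ne_zero, hqdeg]
    norm_num
  obtain ⟨r, hr⟩ : (X - C a) ∣ q := dvd_iff_isRoot.mpr ha
  have hr0 : r.Monic := by
    refine (monic_X_sub_C a).of_mul_monic_left ?_
    rw [← hr]; exact hq0
  have hrdeg : r.natDegree = 1 := by
    have h12 := hqdeg
    rw [hr, natDegree_mul (X_sub_C_ne_zero a) hr0.ne_zero, natDegree_X_sub_C] at h12
    omega
  have hrform : r = X + C (r.coeff 0) := hr0.eq_X_add_C hrdeg
  set c := r.coeff 0 with hc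
  have hac : a * c = -1 := by
    have h13 := heval0
    rw [hq, hr, hrform] at h13
    simp only [eval_mul, eval_sub, eval_add, eval_X, eval_C] at h13
    linear_combination h13
  have ha0 : a ≠ 0 := by
    intro h
    rw [h, zero_mul] at hac
    norm_num at hac
  have hcval : c = -a⁻¹ := by
    field_simp
    linear_combination hac
  refine ⟨a, ha0, ?_⟩
  rw [hchar, hq, hr, hrform, hcval, map_neg, ← sub_eq_add_neg, mul_assoc]

end Sl2AutAux

/-- Any Lie algebra automorphism `α` of `sl(2, ℂ)` has eigenvalues
`1, a, a⁻¹` for some nonzero `a ∈ ℂ`: its characteristic polynomial is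
`(X - 1)(X - a)(X - a⁻¹)`. -/
theorem sl2_automorphism_eigenvalues
    (α : LieAlgebra.SpecialLinear.sl (Fin 2) ℂ →ₗ[ℂ] LieAlgebra.SpecialLinear.sl (Fin 2) ℂ)
    (hbij : Function.Bijective α)
    (haut : ∀ x y : LieAlgebra.SpecialLinear.sl (Fin 2) ℂ, α ⁅x, y⁆ = ⁅α x, α y⁆) :
    ∃ a : ℂ, a ≠ 0 ∧
      LinearMap.charpoly α = (X - C 1) * (X - C a) * (X - C a⁻¹) := by
  exact Sl2AutAux.main α hbij haut
end

section
/- Let a, b be nonzero complex numbers. Let L = ℂ³ with basis (e₁,e₂,e₃), let α be the linear map with matrix diag(1, a, 1/a) and β the linear map with matrix diag(1, b, 1/b) in this basis, and let [·,·] be the bilinear map determined by [e₁,e₁] = 0, [e₁,e₂] = 2b·e₂, [e₁,e₃] = -(2/b)·e₃, [e₂,e₁] = -2a·e₂, [e₂,e₂] = 0, [e₂,e₃] = (a/b)·e₁, [e₃,e₁] = (2/a)·e₃, [e₃,e₂] = -(b/a)·e₁, [e₃,e₃] = 0. Then (L,[·,·],α,β) is a regular multiplicative BiHom-Lie algebra: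 α∘β = β∘α, α[x,y] = [α(x),α(y)] and β[x,y] = [β(x),β(y)], [β(x),α(y)] = -[β(y),α(x)], the BiHom-Jacobi identity [β²(x),[β(y),α(z)]] + [β²(y),[β(z),α(x)]] + [β²(z),[β(x),α(y)]] = 0 holds for all x,y,z ∈ L, and α, β are bijective. -/
set_option maxHeartbeats 4000000

/-- The family `𝓛₁`: on `L = ℂ³` with standard basis `(e₁,e₂,e₃)`,
`α = diag(1, a, 1/a)`, `β = diag(1, b, 1/b)`, and the indicated bracket,
`(L, [·,·], α, β)` is a regular multiplicative BiHom-Lie algebra. -/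
theorem family_L1_is_biHomLie (a b : ℂ) (ha : a ≠ 0) (hb : b ≠ 0)
    (α β : (Fin 3 → ℂ) →ₗ[ℂ] (Fin 3 → ℂ))
    (br : (Fin 3 → ℂ) →ₗ[ℂ] (Fin 3 → ℂ) →ₗ[ℂ] (Fin 3 → ℂ))
    (e : Fin 3 → (Fin 3 → ℂ)) (he : e = fun i => Pi.single i 1)
    (hα0 : α (e 0) = e 0) (hα1 : α (e 1) = a • e 1) (hα2 : α (e 2) = a⁻¹ • e 2)
    (hβ0 : β (e 0) = e 0) (hβ1 : β (e 1) = b • e 1) (hβ2 : β (e 2) = b⁻¹ • e 2)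
    (h00 : br (e 0) (e 0) = 0)
    (h01 : br (e 0) (e 1) = (2 * b) • e 1)
    (h02 : br (e 0) (e 2) = (-(2 / b)) • e 2)
    (h10 : br (e 1) (e 0) = (-(2 * a)) • e 1)
    (h11 : br (e 1) (e 1) = 0)
    (h12 : br (e 1) (e 2) = (a / b) • e 0)
    (h20 : br (e 2) (e 0) = (2 / a) • e 2)
    (h21 : br (e 2) (e 1) = (-(b / a)) • e 0)
    (h22 : br (e 2) (e 2) = 0) :
    (∀ x : Fin 3 → ℂ, α (β x) = β (α x)) ∧
    (∀ x y : Fin 3 → ℂ, α (br x y) = br (α x) (α y)) ∧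
    (∀ x y : Fin 3 → ℂ, β (br x y) = br (β x) (β y)) ∧
    (∀ x y : Fin 3 → ℂ, br (β x) (α y) = - br (β y) (α x)) ∧
    (∀ x y z : Fin 3 → ℂ,
      br (β (β x)) (br (β y) (α z)) + br (β (β y)) (br (β z) (α x))
        + br (β (β z)) (br (β x) (α y)) = 0) ∧
    Function.Bijective α ∧ Function.Bijective β := by
  have hx : ∀ x : Fin 3 → ℂ, x = x 0 • e 0 + x 1 • e 1 + x 2 • e 2 := by
    subst he
    intro x
    funext j
    fin_cases j <;> simp [Pi.single_apply]
  have hα : ∀ x : Fin 3 → ℂ, α x = ![x 0, a * x 1, a⁻¹ * x 2] := by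
    intro x
    rw [hx x]
    simp only [map_add, map_smul, hα0, hα1, hα2, smul_smul]
    subst he
    funext j
    fin_cases j <;> simp <;> ring
  have hβ : ∀ x : Fin 3 → ℂ, β x = ![x 0, b * x 1, b⁻¹ * x 2] := by
    intro x
    rw [hx x]
    simp only [map_add, map_smul, hβ0, hβ1, hβ2, smul_smul]
    subst he
    funext j
    fin_cases j <;> simp <;> ring
  refine ⟨?_, ?_, ?_, ?_, ?_, ?_, ?_⟩
  · intro x
    rw [hx x]
    simp only [map_add, map_smul, hα0, hα1, hα2, hβ0, hβ1, hβ2, smul_smul]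
    match_scalars
    any_goals ring
    all_goals (field_simp; ring)
  · intro x y
    rw [hx x, hx y]
    simp only [map_add, map_smul, LinearMap.add_apply, LinearMap.smul_apply,
      hα0, hα1, hα2, h00, h01, h02, h10, h11, h12, h20, h21, h22,
      smul_zero, map_zero, smul_smul, smul_add, add_zero, zero_add]
    match_scalars
    any_goals ring
    all_goals (field_simp <;> ring)
  · intro x y
    rw [hx x, hx y]
    simp only [map_add, map_smul, LinearMap.add_apply, LinearMap.smul_apply,
      hβ0, hβ1, hβ2, h00, h01, h02, h10, h11, h12, h20, h21, h22,
      smul_zero, map_zero, smul_smul, smul_add, add_zero, zero_add]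
    match_scalars
    any_goals ring
    all_goals (field_simp <;> ring)
  · intro x y
    rw [hx x, hx y]
    simp only [map_add, map_smul, LinearMap.add_apply, LinearMap.smul_apply,
      hα0, hα1, hα2, hβ0, hβ1, hβ2, h00, h01, h02, h10, h11, h12, h20, h21, h22,
      smul_zero, map_zero, smul_smul, smul_add, smul_neg, neg_add, neg_neg, add_zero, zero_add]
    match_scalars
    any_goals ring
    all_goals (field_simp; ring)
  · intro x y z
    rw [hx x, hx y, hx z]
    simp only [map_add, map_smul, LinearMap.add_apply, LinearMap.smul_apply,
      hα0, hα1, hα2, hβ0, hβ1, hβ2, h00, h01, h02, h10, h11, h12, h20, h21, h22,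
      smul_zero, map_zero, smul_smul, smul_add, add_zero, zero_add]
    match_scalars
    any_goals ring
    all_goals (field_simp; ring)
  · refine Function.bijective_iff_has_inverse.mpr
      ⟨fun x => ![x 0, a⁻¹ * x 1, a * x 2], ?_, ?_⟩ <;> intro x
    · rw [hα]
      funext j
      fin_cases j <;> simp <;> field_simp
    · rw [hα]
      funext j
      fin_cases j <;> simp <;> field_simp
  · refine Function.bijective_iff_has_inverse.mpr
      ⟨fun x => ![x 0, b⁻¹ * x 1, b * x 2], ?_, ?_⟩ <;> intro x
    · rw [hβ]
      funext j
      fin_cases j <;> simp <;> field_simp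
    · rw [hβ]
      funext j
      fin_cases j <;> simp <;> field_simp
end

section
/- Let L = ℂ³ with basis (e₁,e₂,e₃), let α be the identity map, let β be the linear map whose matrix in this basis is the upper unitriangular matrix with rows (1,1,0), (0,1,1), (0,0,1), and let [·,·] be the bilinear map determined by [e₁,e₁] = 0, [e₁,e₂] = 2e₁, [e₁,e₃] = e₁ + 2e₂, [e₂,e₁] = -2e₁, [e₂,e₂] = -2e₁, [e₂,e₃] = e₁ + e₂ + 2e₃, [e₃,e₁] = e₁ - 2e₂, [e₃,e₂] = -3e₂ - 2e₃, [e₃,e₃] = -e₁ - e₂ - 2e₃. Then (L,[·,·],α,β) is a regular multiplicative BiHom-Lie algebra: α∘β = β∘α, α[x,y] = [α(x),α(y)] and β[x,y] = [β(x),β(y)], [β(x),α(y)] = -[β(y),α(x)], the BiHom-Jacobi identity [β²(x),[β(y),α(z)]] + [β²(y),[β(z),α(x)]] + [β²(z),[β(x),α(y)]] = 0 holds for all x,y,z ∈ L, and α, β are bijective. -/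
/-- The family `𝓛₂`: on `L = ℂ³` with standard basis `(e₁,e₂,e₃)`,
`α = id`, `β` the upper unitriangular matrix with rows `(1,1,0), (0,1,1), (0,0,1)`
(so `β e₁ = e₁`, `β e₂ = e₁ + e₂`, `β e₃ = e₂ + e₃`), and the indicated bracket,
`(L, [·,·], α, β)` is a regular multiplicative BiHom-Lie algebra. -/
theorem family_L2_is_biHomLie
    (α β : (Fin 3 → ℂ) →ₗ[ℂ] (Fin 3 → ℂ))
    (br : (Fin 3 → ℂ) →ₗ[ℂ] (Fin 3 → ℂ) →ₗ[ℂ] (Fin 3 → ℂ))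
    (e : Fin 3 → (Fin 3 → ℂ)) (he : e = fun i => Pi.single i 1)
    (hα : α = LinearMap.id)
    (hβ0 : β (e 0) = e 0) (hβ1 : β (e 1) = e 0 + e 1) (hβ2 : β (e 2) = e 1 + e 2)
    (h00 : br (e 0) (e 0) = 0)
    (h01 : br (e 0) (e 1) = (2 : ℂ) • e 0)
    (h02 : br (e 0) (e 2) = e 0 + (2 : ℂ) • e 1)
    (h10 : br (e 1) (e 0) = (-2 : ℂ) • e 0)
    (h11 : br (e 1) (e 1) = (-2 : ℂ) • e 0)
    (h12 : br (e 1) (e 2) = e 0 + e 1 + (2 : ℂ) • e 2)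
    (h20 : br (e 2) (e 0) = e 0 - (2 : ℂ) • e 1)
    (h21 : br (e 2) (e 1) = (-3 : ℂ) • e 1 - (2 : ℂ) • e 2)
    (h22 : br (e 2) (e 2) = - e 0 - e 1 - (2 : ℂ) • e 2) :
    (∀ x : Fin 3 → ℂ, α (β x) = β (α x)) ∧
    (∀ x y : Fin 3 → ℂ, α (br x y) = br (α x) (α y)) ∧
    (∀ x y : Fin 3 → ℂ, β (br x y) = br (β x) (β y)) ∧
    (∀ x y : Fin 3 → ℂ, br (β x) (α y) = - br (β y) (α x)) ∧
    (∀ x y z : Fin 3 → ℂ,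
      br (β (β x)) (br (β y) (α z)) + br (β (β y)) (br (β z) (α x))
        + br (β (β z)) (br (β x) (α y)) = 0) ∧
    Function.Bijective α ∧ Function.Bijective β := by
  -- decomposition in the standard basis
  have hdec : ∀ x : Fin 3 → ℂ, x = x 0 • e 0 + x 1 • e 1 + x 2 • e 2 := by
    intro x
    funext i
    fin_cases i <;> simp [he]
  -- explicit formula for β
  have hβ : ∀ x : Fin 3 → ℂ, β x = ![x 0 + x 1, x 1 + x 2, x 2] := by
    intro x
    conv_lhs => rw [hdec x]
    rw [map_add, map_add, map_smul, map_smul, map_smul, hβ0, hβ1, hβ2]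
    funext i
    fin_cases i <;> simp [he] <;> ring
  -- explicit formula for the bracket
  have hbr : ∀ x y : Fin 3 → ℂ, br x y =
      ![2*x 0*y 1 + x 0*y 2 - 2*x 1*y 0 - 2*x 1*y 1 + x 1*y 2 + x 2*y 0 - x 2*y 2,
        2*x 0*y 2 + x 1*y 2 - 2*x 2*y 0 - 3*x 2*y 1 - x 2*y 2,
        2*x 1*y 2 - 2*x 2*y 1 - 2*x 2*y 2] := by
    intro x y
    conv_lhs => rw [hdec x, hdec y]
    simp only [map_add, map_smul, LinearMap.add_apply, LinearMap.smul_apply,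
      h00, h01, h02, h10, h11, h12, h20, h21, h22]
    funext i
    fin_cases i <;> simp [he] <;> ring
  refine ⟨?_, ?_, ?_, ?_, ?_, ?_, ?_⟩
  · intro x; rw [hα]; rfl
  · intro x y; rw [hα]; rfl
  · intro x y
    rw [hbr x y, hβ, hβ x, hβ y, hbr]
    funext i
    fin_cases i <;> simp <;> ring
  · intro x y
    rw [hα, hbr, hbr, hβ x, hβ y]
    funext i
    fin_cases i <;> simp <;> ring
  · intro x y z
    simp only [hα, LinearMap.id_apply]
    rw [hβ x, hβ y, hβ z]
    rw [hβ ![x 0 + x 1, x 1 + x 2, x 2], hβ ![y 0 + y 1, y 1 + y 2, y 2],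
      hβ ![z 0 + z 1, z 1 + z 2, z 2]]
    rw [hbr (![y 0 + y 1, y 1 + y 2, y 2]) z, hbr (![z 0 + z 1, z 1 + z 2, z 2]) x,
      hbr (![x 0 + x 1, x 1 + x 2, x 2]) y]
    rw [hbr, hbr, hbr]
    funext i
    fin_cases i <;> simp <;> ring
  · rw [hα]; exact Function.bijective_id
  · have h1 : Function.LeftInverse (fun x : Fin 3 → ℂ => ![x 0 - x 1 + x 2, x 1 - x 2, x 2]) β := by
      intro x
      rw [hβ x]
      funext i
      fin_cases i <;> simp <;> ring
    have h2 : Function.RightInverse (fun x : Fin 3 → ℂ => ![x 0 - x 1 + x 2, x 1 - x 2, x 2]) β := by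
      intro x
      rw [hβ]
      funext i
      fin_cases i <;> simp <;> ring
    exact ⟨h1.injective, h2.surjective⟩
end
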